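/- Let E ∈ M_n(T) be a full rank tropical idempotent. Then the set of monomial matrices P with C(PE) = C(E) coincides with the set of monomial matrices that commute with E (PE = EP). -/

import Mathlib

open scoped Classical

/-- The tropical (max-plus) semiring carrier: `ℝ ∪ {-∞}`, where `⊔` is tropical
addition (max) and `+` is tropical multiplication (with `⊥ = -∞` absorbing). -/
abbrev Trop : Type := WithBot ℝ

/-- Tropical matrix multiplication: `(A ⊗ B) i j = max_k (A i k + B k j)`. -/
def tmul {n m p : ℕ} (A : Fin n → Fin m → Trop) (B : Fin m → Fin p → Trop) :
    Fin n → Fin p → Trop :=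
  fun i j => Finset.univ.sup fun k => A i k + B k j

/-- Tropical matrix-vector multiplication (column vector on the right). -/
def tvmul {n m : ℕ} (A : Fin n → Fin m → Trop) (v : Fin m → Trop) : Fin n → Trop :=
  fun i => Finset.univ.sup fun k => A i k + v k

/-- Tropical vector-matrix multiplication (row vector on the left). -/
def vtmul {n m : ℕ} (v : Fin n → Trop) (A : Fin n → Fin m → Trop) : Fin m → Trop :=
  fun j => Finset.univ.sup fun k => v k + A k j

/-- The tropical identity matrix: `0` on the diagonal, `-∞` elsewhere. -/
def tId (n : ℕ) : Fin n → Fin n → Trop :=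
  fun i j => if i = j then ((0 : ℝ) : Trop) else ⊥

/-- A monomial matrix: exactly one entry different from `-∞` in each row and each column. -/
def IsMonomial {n : ℕ} (P : Fin n → Fin n → Trop) : Prop :=
  (∀ i, ∃! j, P i j ≠ ⊥) ∧ (∀ j, ∃! i, P i j ≠ ⊥)

/-- A `T`-subsemimodule of `T^n`: closed under tropical addition (max) and scaling. -/
def IsTropSubmodule {n : ℕ} (S : Set (Fin n → Trop)) : Prop :=
  (∀ x ∈ S, ∀ y ∈ S, x ⊔ y ∈ S) ∧
  (∀ c : Trop, ∀ x ∈ S, (fun i => c + x i) ∈ S)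

/-- The `T`-subsemimodule generated by a set of vectors. -/
def genBy {n : ℕ} (G : Set (Fin n → Trop)) : Set (Fin n → Trop) :=
  ⋂₀ {S | IsTropSubmodule S ∧ G ⊆ S}

/-- The column space of a tropical matrix. -/
def colSpace {n m : ℕ} (A : Fin n → Fin m → Trop) : Set (Fin n → Trop) :=
  genBy {v | ∃ j, v = fun i => A i j}

/-- The row space of a tropical matrix. -/
def rowSpace {n m : ℕ} (A : Fin n → Fin m → Trop) : Set (Fin m → Trop) :=
  genBy {v | ∃ i, v = fun j => A i j}

/-- The column rank: minimum cardinality of a generating set of the column space. -/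
noncomputable def colRank {n m : ℕ} (A : Fin n → Fin m → Trop) : ℕ :=
  sInf {k | ∃ G : Finset (Fin n → Trop), G.card = k ∧ genBy (↑G) = colSpace A}

/-- The row rank: minimum cardinality of a generating set of the row space. -/
noncomputable def rowRank {n m : ℕ} (A : Fin n → Fin m → Trop) : ℕ :=
  sInf {k | ∃ G : Finset (Fin m → Trop), G.card = k ∧ genBy (↑G) = rowSpace A}

/-- Isomorphism of tropical subsemimodules (given by a bijection preserving
tropical addition and scaling). -/
def TropIso {n m : ℕ} (S : Set (Fin n → Trop)) (S' : Set (Fin m → Trop)) : Prop :=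
  ∃ f : (Fin n → Trop) → (Fin m → Trop),
    Set.BijOn f S S' ∧
    (∀ x ∈ S, ∀ y ∈ S, f (x ⊔ y) = f x ⊔ f y) ∧
    (∀ c : Trop, ∀ x ∈ S, f (fun i => c + x i) = fun i => c + f x i)

/-- The `H`-class of a matrix `A` in `M(T)` (among matrices of the same shape),
characterised by equality of column and row spaces. -/
def HSet {n m : ℕ} (A : Fin n → Fin m → Trop) : Set (Fin n → Fin m → Trop) :=
  {B | colSpace B = colSpace A ∧ rowSpace B = rowSpace A}

/-- Adjacency of the coloured bipartite graph `B_A` of a tropical matrix. -/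
def BAdj {r c : ℕ} (A : Fin r → Fin c → Trop) :
    (Fin r ⊕ Fin c) → (Fin r ⊕ Fin c) → Prop
  | Sum.inl i, Sum.inr j => A i j ≠ ⊥
  | Sum.inr j, Sum.inl i => A i j ≠ ⊥
  | _, _ => False

/-- Connectedness of the bipartite graph `B_A`. -/
def BConnected {r c : ℕ} (A : Fin r → Fin c → Trop) : Prop :=
  ∀ x y : Fin r ⊕ Fin c, Relation.ReflTransGen (BAdj A) x y

/-- `lam` is a tropical eigenvalue of `P`. -/
def IsEig {n : ℕ} (P : Fin n → Fin n → Trop) (lam : Trop) : Prop :=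
  ∃ v : Fin n → Trop, v ≠ (fun _ => ⊥) ∧ tvmul P v = fun i => lam + v i

/-- The group `G_A` of monomial matrices `P` with `C(PA) = C(A)`. -/
def GA {r c : ℕ} (A : Fin r → Fin c → Trop) : Set (Fin r → Fin r → Trop) :=
  {P | IsMonomial P ∧ colSpace (tmul P A) = colSpace A}

/-- The dual group `{}_AG` of monomial matrices `Q` with `R(AQ) = R(A)`. -/
def AGr {r c : ℕ} (A : Fin r → Fin c → Trop) : Set (Fin c → Fin c → Trop) :=
  {Q | IsMonomial Q ∧ rowSpace (tmul A Q) = rowSpace A}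

namespace S15

lemma tadd_sup (a b c : Trop) : a + (b ⊔ c) = (a + b) ⊔ (a + c) := by
  rcases le_total b c with h | h
  · rw [sup_of_le_right h, sup_of_le_right (add_le_add le_rfl h)]
  · rw [sup_of_le_left h, sup_of_le_left (add_le_add le_rfl h)]

lemma add_fsup {ι : Type*} (s : Finset ι) (f : ι → Trop) (a : Trop) :
    a + s.sup f = s.sup fun x => a + f x := by
  induction s using Finset.cons_induction with
  | empty => simp [WithBot.add_bot]
  | cons i s hi ih => rw [Finset.sup_cons, Finset.sup_cons, tadd_sup, ih]

lemma fsup_add {ι : Type*} (s : Finset ι) (f : ι → Trop) (a : Trop) :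
    s.sup f + a = s.sup fun x => f x + a := by
  rw [add_comm, add_fsup]; exact Finset.sup_congr rfl fun x _ => add_comm _ _

lemma coe_add_eq_zero {r : ℝ} {x : Trop} (h : (r : Trop) + x = 0) : x = ((-r : ℝ) : Trop) := by
  have hx : x ≠ ⊥ := by rintro rfl; simp [WithBot.add_bot] at h
  obtain ⟨y, rfl⟩ := WithBot.ne_bot_iff_exists.mp hx
  rw [← WithBot.coe_add] at h
  norm_cast at h ⊢; linarith

lemma subset_genBy {n : ℕ} (G : Set (Fin n → Trop)) : G ⊆ genBy G :=
  fun v hv => Set.mem_sInter.2 fun _ hS => hS.2 hv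

lemma genBy_subset {n : ℕ} {G S : Set (Fin n → Trop)} (hS : IsTropSubmodule S)
    (h : G ⊆ S) : genBy G ⊆ S :=
  fun v hv => Set.mem_sInter.1 hv S ⟨hS, h⟩

lemma genBy_submodule {n : ℕ} (G : Set (Fin n → Trop)) : IsTropSubmodule (genBy G) := by
  constructor
  · intro x hx y hy
    exact Set.mem_sInter.2 fun S hS => hS.1.1 x (Set.mem_sInter.1 hx S hS) y (Set.mem_sInter.1 hy S hS)
  · intro c x hx
    exact Set.mem_sInter.2 fun S hS => hS.1.2 c x (Set.mem_sInter.1 hx S hS)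

lemma comb_mem {n : ℕ} {ι : Type*} {S : Set (Fin n → Trop)} (hS : IsTropSubmodule S)
    {s : Finset ι} (hs : s.Nonempty) (c : ι → Trop) (v : ι → Fin n → Trop)
    (hv : ∀ k ∈ s, v k ∈ S) :
    (fun r => s.sup fun k => c k + v k r) ∈ S := by
  induction hs using Finset.Nonempty.cons_induction with
  | singleton a =>
      simp only [Finset.sup_singleton]
      exact hS.2 (c a) (v a) (hv a (Finset.mem_singleton_self a))
  | cons a s ha hs ih =>
      simp only [Finset.sup_cons]
      have h1 : (fun i => c a + v a i) ∈ S := hS.2 (c a) (v a) (hv a (Finset.mem_cons_self a s))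
      have h2 : (fun r => s.sup fun k => c k + v k r) ∈ S :=
        ih fun k hk => hv k (Finset.mem_cons_of_mem hk)
      exact hS.1 _ h1 _ h2

/-- The fixed set of `E`. -/
def Fix {n : ℕ} (E : Fin n → Fin n → Trop) : Set (Fin n → Trop) :=
  {x | ∀ i, (Finset.univ.sup fun l => E i l + x l) = x i}

lemma fix_submodule {n : ℕ} (E : Fin n → Fin n → Trop) : IsTropSubmodule (Fix E) := by
  constructor
  · intro x hx y hy i
    have : (fun l => E i l + (x ⊔ y) l) = fun l => (E i l + x l) ⊔ (E i l + y l) := by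
      funext l; exact tadd_sup _ _ _
    rw [this]
    rw [show (Finset.univ.sup fun l => (E i l + x l) ⊔ (E i l + y l))
        = (Finset.univ.sup fun l => E i l + x l) ⊔ (Finset.univ.sup fun l => E i l + y l)
      from Finset.sup_sup, hx i, hy i]
    rfl
  · intro c x hx i
    have : (fun l => E i l + (c + x l)) = fun l => c + (E i l + x l) := by
      funext l; rw [← add_assoc, add_comm (E i l) c, add_assoc]
    rw [this, ← add_fsup, hx i]

lemma colSpace_subset_fix {n : ℕ} (E : Fin n → Fin n → Trop) (hidem : tmul E E = E) :
    colSpace E ⊆ Fix E := by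
  apply genBy_subset (fix_submodule E)
  rintro v ⟨j, rfl⟩ i
  exact congrFun (congrFun hidem i) j

/-- Tropical combinations of the columns of `A`. -/
def Comb {n m : ℕ} (A : Fin n → Fin m → Trop) : Set (Fin n → Trop) :=
  {x | ∃ c : Fin m → Trop, ∀ i, x i = Finset.univ.sup fun j => c j + A i j}

lemma comb_submodule {n m : ℕ} (A : Fin n → Fin m → Trop) : IsTropSubmodule (Comb A) := by
  constructor
  · rintro x ⟨c, hc⟩ y ⟨d, hd⟩
    refine ⟨fun j => c j ⊔ d j, fun i => ?_⟩
    have : (fun j => (c j ⊔ d j) + A i j) = fun j => (c j + A i j) ⊔ (d j + A i j) := by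
      funext j; rw [add_comm, tadd_sup, add_comm (A i j) (c j), add_comm (A i j) (d j)]
    rw [this]
    rw [show (Finset.univ.sup fun j => (c j + A i j) ⊔ (d j + A i j))
        = (Finset.univ.sup fun j => c j + A i j) ⊔ (Finset.univ.sup fun j => d j + A i j)
      from Finset.sup_sup, ← hc i, ← hd i]
    rfl
  · rintro e x ⟨c, hc⟩
    refine ⟨fun j => e + c j, fun i => ?_⟩
    have : (fun j => (e + c j) + A i j) = fun j => e + (c j + A i j) := by
      funext j; rw [add_assoc]
    rw [this, ← add_fsup, ← hc i]

lemma colSpace_subset_comb {n m : ℕ} (A : Fin n → Fin m → Trop) :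
    colSpace A ⊆ Comb A := by
  apply genBy_subset (comb_submodule A)
  rintro v ⟨j, rfl⟩
  refine ⟨fun k => if k = j then (0 : Trop) else ⊥, fun i => ?_⟩
  apply le_antisymm
  · have := Finset.le_sup (f := fun k => (if k = j then (0:Trop) else ⊥) + A i k)
      (Finset.mem_univ j)
    simpa using this
  · apply Finset.sup_le
    intro k _
    by_cases hk : k = j
    · subst hk; simp
    · simp [hk, WithBot.bot_add]

/-- columns are in the column space -/
lemma col_mem_colSpace {n m : ℕ} (A : Fin n → Fin m → Trop) (j : Fin m) :
    (fun i => A i j) ∈ colSpace A :=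
  subset_genBy _ ⟨j, rfl⟩

/-- If some column of `E` is generated by the others, `colRank E < n`. -/
lemma colRank_lt_of_redundant {n : ℕ} (E : Fin n → Fin n → Trop) (i : Fin n)
    (h : (fun r => E r i) ∈ genBy {v | ∃ j, j ≠ i ∧ v = fun r => E r j}) :
    colRank E ≤ n - 1 := by
  set G : Finset (Fin n → Trop) := (Finset.univ.erase i).image (fun j => fun r => E r j) with hG
  have hGcoe : (↑G : Set (Fin n → Trop)) = {v | ∃ j, j ≠ i ∧ v = fun r => E r j} := by
    ext v
    simp only [hG, Finset.coe_image, Finset.coe_erase, Finset.coe_univ, Set.mem_image,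
      Set.mem_diff, Set.mem_univ, true_and, Set.mem_singleton_iff, Set.mem_setOf_eq]
    constructor
    · rintro ⟨j, hj, rfl⟩; exact ⟨j, hj, rfl⟩
    · rintro ⟨j, hj, rfl⟩; exact ⟨j, hj, rfl⟩
  have hgen : genBy (↑G) = colSpace E := by
    rw [hGcoe]
    apply le_antisymm
    · apply genBy_subset (genBy_submodule _)
      rintro v ⟨j, _, rfl⟩
      exact col_mem_colSpace E j
    · apply genBy_subset (genBy_submodule _)
      rintro v ⟨j, rfl⟩
      by_cases hj : j = i
      · subst hj; exact h
      · exact subset_genBy _ ⟨j, hj, rfl⟩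
  have hle : colRank E ≤ G.card := Nat.sInf_le ⟨G, rfl, hgen⟩
  have : G.card ≤ n - 1 := by
    calc G.card ≤ (Finset.univ.erase i).card := Finset.card_image_le
    _ = n - 1 := by rw [Finset.card_erase_of_mem (Finset.mem_univ i), Finset.card_univ, Fintype.card_fin]
  omega

lemma triangle {n : ℕ} {E : Fin n → Fin n → Trop} (hidem : tmul E E = E) (i j k : Fin n) :
    E i k + E k j ≤ E i j := by
  have h := congrFun (congrFun hidem i) j
  calc E i k + E k j ≤ Finset.univ.sup fun l => E i l + E l j :=
        Finset.le_sup (f := fun l => E i l + E l j) (Finset.mem_univ k)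
  _ = E i j := h

lemma diag_zero {n : ℕ} {E : Fin n → Fin n → Trop} (hidem : tmul E E = E)
    (hc : colRank E = n) (hn : 2 ≤ n) (i : Fin n) : E i i = 0 := by
  by_contra hne
  have hlt : E i i < 0 := by
    rcases eq_or_ne (E i i) ⊥ with hb | hb
    · rw [hb]; exact WithBot.bot_lt_coe 0
    · obtain ⟨r, hr⟩ := WithBot.ne_bot_iff_exists.mp hb
      have h2 : E i i + E i i ≤ E i i := triangle hidem i i i
      rw [← hr, ← WithBot.coe_add] at h2
      rw [← hr]
      have h3 : r + r ≤ r := by exact_mod_cast h2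
      have hr0 : r ≠ 0 := fun h0 => hne (by rw [← hr, h0]; rfl)
      have h4 : r < 0 := lt_of_le_of_ne (by linarith) hr0
      exact_mod_cast h4
  have hcol : ∀ r, E r i = (Finset.univ.erase i).sup fun k => E k i + E r k := by
    intro r
    have hsum : (Finset.univ.sup fun k => E r k + E k i) = E r i :=
      congrFun (congrFun hidem r) i
    apply le_antisymm
    · rcases eq_or_ne (E r i) ⊥ with hb | hb
      · rw [hb]; exact bot_le
      · haveI : Nonempty (Fin n) := ⟨⟨0, by omega⟩⟩
        obtain ⟨k, -, hk⟩ := Finset.exists_mem_eq_sup Finset.univ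
          Finset.univ_nonempty (fun k => E r k + E k i)
        have hki : k ≠ i := by
          intro hki
          have heq : E r i = E r i + E i i := by
            conv_lhs => rw [← hsum, hk, hki]
          have hlt2 : E r i + E i i < E r i := by
            obtain ⟨s', hs⟩ := WithBot.ne_bot_iff_exists.mp hb
            rw [← hs]
            calc (s' : Trop) + E i i < (s' : Trop) + 0 :=
              WithBot.add_lt_add_left WithBot.coe_ne_bot hlt
            _ = (s' : Trop) := add_zero _
          rw [← heq] at hlt2
          exact lt_irrefl _ hlt2
        calc E r i = E r k + E k i := by rw [← hsum, hk]
        _ = E k i + E r k := add_comm _ _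
        _ ≤ (Finset.univ.erase i).sup fun l => E l i + E r l :=
          Finset.le_sup (f := fun l => E l i + E r l)
            (Finset.mem_erase.2 ⟨hki, Finset.mem_univ k⟩)
    · apply Finset.sup_le
      intro k _
      rw [add_comm, ← hsum]
      exact Finset.le_sup (f := fun l => E r l + E l i) (Finset.mem_univ k)
  have hred : (fun r => E r i) ∈ genBy {v | ∃ j, j ≠ i ∧ v = fun r => E r j} := by
    have hne' : (Finset.univ.erase i).Nonempty := by
      rw [← Finset.card_pos, Finset.card_erase_of_mem (Finset.mem_univ i),
        Finset.card_univ, Fintype.card_fin]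
      omega
    have hmem := comb_mem (genBy_submodule {v | ∃ j, j ≠ i ∧ v = fun r => E r j}) hne'
      (fun k => E k i) (fun k => fun r => E r k)
      (fun k hk => subset_genBy _ ⟨k, (Finset.mem_erase.1 hk).1, rfl⟩)
    have heq : (fun r => E r i) =
        fun r => (Finset.univ.erase i).sup fun k => E k i + E r k := by
      funext r; exact hcol r
    rw [heq]; exact hmem
  have := colRank_lt_of_redundant E i hred
  omega

lemma offdiag_neg {n : ℕ} {E : Fin n → Fin n → Trop} (hidem : tmul E E = E)
    (hc : colRank E = n) (hn : 2 ≤ n) {i j : Fin n} (hij : i ≠ j) :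
    E i j + E j i < 0 := by
  by_contra hge
  push_neg at hge
  have hcol : ∀ r, E r i = E j i + E r j := by
    intro r
    apply le_antisymm
    · calc E r i = 0 + E r i := (zero_add _).symm
      _ ≤ (E i j + E j i) + E r i := add_le_add hge le_rfl
      _ = E j i + (E r i + E i j) := by rw [add_comm (E i j) (E j i), add_assoc,
            add_comm (E i j) (E r i)]
      _ ≤ E j i + E r j := add_le_add le_rfl (triangle hidem r j i)
    · calc E j i + E r j = E r j + E j i := add_comm _ _
      _ ≤ E r i := triangle hidem r i j
  have hred : (fun r => E r i) ∈ genBy {v | ∃ j, j ≠ i ∧ v = fun r => E r j} := by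
    have hmem := (genBy_submodule {v | ∃ k, k ≠ i ∧ v = fun r => E r k}).2 (E j i)
      (fun r => E r j) (subset_genBy _ ⟨j, Ne.symm hij, rfl⟩)
    have : (fun r => E r i) = fun r => E j i + E r j := by funext r; exact hcol r
    rw [this]; exact hmem
  have := colRank_lt_of_redundant E i hred
  omega

lemma perm_sum_neg {n : ℕ} {E : Fin n → Fin n → Trop}
    (hdiag : ∀ i, E i i = 0)
    (htri : ∀ i j k, E i k + E k j ≤ E i j)
    (hstrict : ∀ i j, i ≠ j → E i j + E j i < 0) :
    ∀ ρ : Equiv.Perm (Fin n), ρ ≠ 1 → (∑ k, E (ρ k) k) < 0 := by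
  suffices h : ∀ m (ρ : Equiv.Perm (Fin n)),
      (Finset.univ.filter fun k => ρ k ≠ k).card ≤ m → ρ ≠ 1 → (∑ k, E (ρ k) k) < 0 by
    intro ρ hρ
    exact h _ ρ le_rfl hρ
  intro m
  induction m with
  | zero =>
      intro ρ hcard hρ
      exfalso
      apply hρ
      apply Equiv.ext
      intro k
      rw [Equiv.Perm.one_apply]
      by_contra hk
      have hmem : k ∈ Finset.univ.filter fun k => ρ k ≠ k := by
        simp only [Finset.mem_filter, Finset.mem_univ, true_and]; exact hk
      have := Finset.card_pos.2 ⟨k, hmem⟩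
      omega
  | succ m ih =>
      intro ρ hcard hρ
      have hj : ∃ j, ρ j ≠ j := by
        by_contra hall
        push_neg at hall
        exact hρ (Equiv.ext hall)
      obtain ⟨j, hjj⟩ := hj
      set k₀ := ρ⁻¹ j with hk₀
      have hρk₀ : ρ k₀ = j := Equiv.apply_symm_apply ρ j
      have hjk : j ≠ k₀ := fun h => hjj (by rw [h, hρk₀]; exact h)
      set ρ' := Equiv.swap j (ρ j) * ρ with hρ'
      have hρ'j : ρ' j = j := by
        simp [hρ', Equiv.Perm.mul_apply, Equiv.swap_apply_left]
      have hρ'k₀ : ρ' k₀ = ρ j := by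
        simp [hρ', Equiv.Perm.mul_apply, hρk₀, Equiv.swap_apply_left]
      have hρ'other : ∀ k, k ≠ j → k ≠ k₀ → ρ' k = ρ k := by
        intro k h1 h2
        have hne1 : ρ k ≠ j := fun h => h2 (by rw [hk₀, ← h]; exact (Equiv.symm_apply_apply ρ k).symm)
        have hne2 : ρ k ≠ ρ j := fun h => h1 (ρ.injective h)
        simp [hρ', Equiv.Perm.mul_apply, Equiv.swap_apply_of_ne_of_ne hne1 hne2]
      -- sum decomposition
      have hsplit : ∀ f : Fin n → Trop,
          ∑ k, f k = f j + (f k₀ + ∑ k ∈ (Finset.univ.erase j).erase k₀, f k) := by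
        intro f
        have h1 : k₀ ∈ Finset.univ.erase j :=
          Finset.mem_erase.2 ⟨Ne.symm hjk, Finset.mem_univ k₀⟩
        rw [Finset.add_sum_erase _ f h1, Finset.add_sum_erase _ f (Finset.mem_univ j)]
      have hrest : ∀ k ∈ (Finset.univ.erase j).erase k₀, E (ρ' k) k = E (ρ k) k := by
        intro k hk
        obtain ⟨h2, hk'⟩ := Finset.mem_erase.1 hk
        obtain ⟨h1, -⟩ := Finset.mem_erase.1 hk'
        rw [hρ'other k h1 h2]
      by_cases hρ'1 : ρ' = 1
      · -- ρ is the transposition (j k₀)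
        have hρj : ρ j = k₀ := by
          have := congrArg (fun e : Equiv.Perm (Fin n) => e k₀) hρ'1
          simp only [Equiv.Perm.one_apply] at this
          rw [hρ'k₀] at this; exact this
        have hfix : ∀ k, k ≠ j → k ≠ k₀ → ρ k = k := by
          intro k h1 h2
          have := congrArg (fun e : Equiv.Perm (Fin n) => e k) hρ'1
          simp only [Equiv.Perm.one_apply] at this
          rw [hρ'other k h1 h2] at this; exact this
        rw [hsplit (fun k => E (ρ k) k)]
        have hR : ∑ k ∈ (Finset.univ.erase j).erase k₀, E (ρ k) k = 0 := by
          rw [Finset.sum_congr rfl (fun k hk => by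
            obtain ⟨h2, hrest'⟩ := Finset.mem_erase.1 hk
            obtain ⟨h1, _⟩ := Finset.mem_erase.1 hrest'
            rw [hfix k h1 h2, hdiag k])]
          exact Finset.sum_const_zero
        rw [hR, add_zero, hρj, hρk₀]
        exact hstrict k₀ j (Ne.symm hjk)
      · -- inductive step
        have hsub : (Finset.univ.filter fun k => ρ' k ≠ k) ⊆
            (Finset.univ.filter fun k => ρ k ≠ k).erase j := by
          intro k hk
          simp only [Finset.mem_filter, Finset.mem_univ, true_and] at hk
          rw [Finset.mem_erase]
          have hkj : k ≠ j := fun h => hk (by rw [h, hρ'j])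
          refine ⟨hkj, ?_⟩
          simp only [Finset.mem_filter, Finset.mem_univ, true_and]
          by_cases hkk : k = k₀
          · rw [hkk, hρk₀]; exact hjk
          · rw [← hρ'other k hkj hkk]; exact hk
        have hjmem : j ∈ Finset.univ.filter fun k => ρ k ≠ k := by
          simp only [Finset.mem_filter, Finset.mem_univ, true_and]; exact hjj
        have hcard' : (Finset.univ.filter fun k => ρ' k ≠ k).card ≤ m := by
          have h1 := Finset.card_le_card hsub
          rw [Finset.card_erase_of_mem hjmem] at h1
          omega
        have hlt := ih ρ' hcard' hρ'1
        have hle : (∑ k, E (ρ k) k) ≤ ∑ k, E (ρ' k) k := by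
          rw [hsplit (fun k => E (ρ k) k), hsplit (fun k => E (ρ' k) k)]
          rw [hρ'j, hρ'k₀, hdiag j, Finset.sum_congr rfl hrest]
          set R := ∑ k ∈ (Finset.univ.erase j).erase k₀, E (ρ k) k
          calc E (ρ j) j + (E (ρ k₀) k₀ + R)
              = (E (ρ j) j + E j k₀) + R := by rw [hρk₀, ← add_assoc]
          _ ≤ E (ρ j) k₀ + R := add_le_add (htri _ _ _) le_rfl
          _ = 0 + (E (ρ j) k₀ + R) := by rw [zero_add]
          _ = 0 + (E (ρ j) k₀ + R) := rfl
        exact lt_of_le_of_lt hle hlt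

lemma perm_sum_nonpos {n : ℕ} {E : Fin n → Fin n → Trop}
    (hdiag : ∀ i, E i i = 0)
    (htri : ∀ i j k, E i k + E k j ≤ E i j)
    (hstrict : ∀ i j, i ≠ j → E i j + E j i < 0)
    (ρ : Equiv.Perm (Fin n)) : (∑ k, E (ρ k) k) ≤ 0 := by
  by_cases h : ρ = 1
  · subst h
    rw [Finset.sum_congr rfl (fun k _ => by rw [Equiv.Perm.one_apply, hdiag k])]
    rw [Finset.sum_const_zero]
  · exact le_of_lt (perm_sum_neg hdiag htri hstrict ρ h)

lemma monomial_struct {n : ℕ} {P : Fin n → Fin n → Trop} (hP : IsMonomial P) :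
    ∃ (σ : Equiv.Perm (Fin n)) (a : Fin n → ℝ),
      ∀ i j, P i j = if j = σ i then ((a i : ℝ) : Trop) else ⊥ := by
  have hex : ∀ i, ∃ j, P i j ≠ ⊥ ∧ ∀ j', P i j' ≠ ⊥ → j' = j := by
    intro i
    obtain ⟨j, hj, hj'⟩ := hP.1 i
    exact ⟨j, hj, hj'⟩
  choose f hf hf' using hex
  have hinj : Function.Injective f := by
    intro i i' h
    obtain ⟨k, hk, hk'⟩ := hP.2 (f i)
    have h1 : i = k := hk' i (hf i)
    have h2 : i' = k := hk' i' (by rw [h]; exact hf i')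
    rw [h1, h2]
  have hbij : Function.Bijective f := (Finite.injective_iff_bijective).mp hinj
  have hreal : ∀ i, ∃ r : ℝ, P i (f i) = (r : Trop) := by
    intro i
    obtain ⟨r, hr⟩ := WithBot.ne_bot_iff_exists.mp (hf i)
    exact ⟨r, hr.symm⟩
  choose a ha using hreal
  refine ⟨Equiv.ofBijective f hbij, a, fun i j => ?_⟩
  by_cases hj : j = (Equiv.ofBijective f hbij) i
  · rw [if_pos hj]
    have : (Equiv.ofBijective f hbij) i = f i := rfl
    rw [hj, this, ha i]
  · rw [if_neg hj]
    by_contra hne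
    exact hj (hf' i j hne)

lemma tmul_monomial_left {n : ℕ} (E P : Fin n → Fin n → Trop)
    (σ : Equiv.Perm (Fin n)) (a : Fin n → ℝ)
    (hP : ∀ i j, P i j = if j = σ i then ((a i : ℝ) : Trop) else ⊥) :
    ∀ i j, tmul P E i j = (a i : Trop) + E (σ i) j := by
  intro i j
  apply le_antisymm
  · apply Finset.sup_le
    intro k _
    by_cases hk : k = σ i
    · rw [hk, hP i (σ i), if_pos rfl]
    · rw [hP i k, if_neg hk, WithBot.bot_add]; exact bot_le
  · calc (a i : Trop) + E (σ i) j
        = P i (σ i) + E (σ i) j := by rw [hP i (σ i), if_pos rfl]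
    _ ≤ tmul P E i j := Finset.le_sup (f := fun k => P i k + E k j) (Finset.mem_univ (σ i))

lemma tmul_monomial_right {n : ℕ} (E P : Fin n → Fin n → Trop)
    (σ : Equiv.Perm (Fin n)) (a : Fin n → ℝ)
    (hP : ∀ i j, P i j = if j = σ i then ((a i : ℝ) : Trop) else ⊥) :
    ∀ i j, tmul E P i j = E i (σ.symm j) + (a (σ.symm j) : Trop) := by
  intro i j
  apply le_antisymm
  · apply Finset.sup_le
    intro k _
    by_cases hk : j = σ k
    · have : k = σ.symm j := by rw [hk]; exact (Equiv.symm_apply_apply σ k).symm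
      rw [← this, hP k j, if_pos hk, this]
    · rw [hP k j, if_neg hk, WithBot.add_bot]; exact bot_le
  · calc E i (σ.symm j) + (a (σ.symm j) : Trop)
        = E i (σ.symm j) + P (σ.symm j) j := by
          rw [hP (σ.symm j) j, if_pos (by rw [Equiv.apply_symm_apply])]
    _ ≤ tmul E P i j := Finset.le_sup (f := fun k => E i k + P k j) (Finset.mem_univ (σ.symm j))

lemma colSpace_tmul_monomial {n : ℕ} (E P : Fin n → Fin n → Trop) (hP : IsMonomial P) :
    colSpace (tmul E P) = colSpace E := by
  obtain ⟨σ, a, hPs⟩ := monomial_struct hP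
  have hEP := tmul_monomial_right E P σ a hPs
  apply le_antisymm
  · apply genBy_subset (genBy_submodule _)
    rintro v ⟨j, rfl⟩
    have hmem := (genBy_submodule {v | ∃ j, v = fun i => E i j}).2 ((a (σ.symm j) : ℝ) : Trop)
      (fun i => E i (σ.symm j)) (subset_genBy _ ⟨σ.symm j, rfl⟩)
    have heq : (fun i => tmul E P i j) =
        fun i => ((a (σ.symm j) : ℝ) : Trop) + E i (σ.symm j) := by
      funext i; rw [hEP i j, add_comm]
    rw [heq]; exact hmem
  · apply genBy_subset (genBy_submodule _)
    rintro v ⟨k, rfl⟩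
    have hmem := (genBy_submodule {v | ∃ j, v = fun i => tmul E P i j}).2
      (((-(a k) : ℝ) : Trop)) (fun i => tmul E P i (σ k)) (subset_genBy _ ⟨σ k, rfl⟩)
    have heq : (fun i => E i k) =
        fun i => ((-(a k) : ℝ) : Trop) + tmul E P i (σ k) := by
      funext i
      rw [hEP i (σ k), Equiv.symm_apply_apply]
      rw [add_comm ((-(a k) : ℝ) : Trop) _, add_assoc, ← WithBot.coe_add, add_neg_cancel,
        WithBot.coe_zero, add_zero]
    rw [heq]; exact hmem

lemma coe_add_eq_coe {r s : ℝ} {x : Trop} (h : (r : Trop) + x = (s : Trop)) :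
    x = ((s - r : ℝ) : Trop) := by
  have hx : x ≠ ⊥ := by rintro rfl; simp [WithBot.add_bot] at h
  obtain ⟨y, rfl⟩ := WithBot.ne_bot_iff_exists.mp hx
  rw [← WithBot.coe_add] at h
  norm_cast at h ⊢; linarith

lemma neg_add_sandwich (s : ℝ) (y : Trop) : (((-s : ℝ) : Trop) + y) + (s : Trop) = y := by
  rw [add_comm _ ((s : ℝ) : Trop), ← add_assoc, ← WithBot.coe_add, add_neg_cancel,
    WithBot.coe_zero, zero_add]

lemma coe_fsum {ι : Type*} (s : Finset ι) (f : ι → ℝ) :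
    ((∑ k ∈ s, f k : ℝ) : Trop) = ∑ k ∈ s, ((f k : ℝ) : Trop) := by
  induction s using Finset.cons_induction with
  | empty => simp
  | cons i s hi ih => rw [Finset.sum_cons, Finset.sum_cons, WithBot.coe_add, ih]

lemma forward {n : ℕ} (E P : Fin n → Fin n → Trop) (hidem : tmul E E = E)
    (hc : colRank E = n) (hn : 2 ≤ n) (hP : IsMonomial P)
    (hcol : colSpace (tmul P E) = colSpace E) : tmul P E = tmul E P := by
  haveI : Nonempty (Fin n) := ⟨⟨0, by omega⟩⟩
  obtain ⟨σ, a, hPs⟩ := monomial_struct hP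
  have hPE := tmul_monomial_left E P σ a hPs
  have hEP := tmul_monomial_right E P σ a hPs
  have hdiag : ∀ i, E i i = 0 := diag_zero hidem hc hn
  have htri := triangle hidem
  have hstrict : ∀ i j : Fin n, i ≠ j → E i j + E j i < 0 :=
    fun i j h => offdiag_neg hidem hc hn h
  set c : Fin n → Fin n → Trop := fun j i => ((a i : ℝ) : Trop) + E (σ i) j with hcdef
  have hfix : ∀ j i, (Finset.univ.sup fun l => E i l + c j l) = c j i := by
    intro j
    have h1 : c j ∈ colSpace (tmul P E) := by
      have heq : c j = fun i => tmul P E i j := by funext i; rw [hPE i j]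
      rw [heq]; exact col_mem_colSpace _ j
    rw [hcol] at h1
    exact colSpace_subset_fix E hidem h1
  have hcomb : ∀ k, ∃ D : Fin n → Trop, ∀ i,
      E i k = Finset.univ.sup fun j => D j + c j i := by
    intro k
    have h1 : (fun i => E i k) ∈ colSpace (tmul P E) := by
      rw [hcol]; exact col_mem_colSpace E k
    obtain ⟨D, hD⟩ := colSpace_subset_comb (tmul P E) h1
    refine ⟨D, fun i => ?_⟩
    have h2 : E i k = Finset.univ.sup fun j => D j + tmul P E i j := hD i
    rw [h2]
    exact Finset.sup_congr rfl fun j _ => by rw [hPE i j]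
  have key : ∀ k, ∃ (jk : Fin n) (m : ℝ), ∀ i, E i k = (m : Trop) + c jk i := by
    intro k
    obtain ⟨D, hD⟩ := hcomb k
    set M : Fin n → Trop := fun l => Finset.univ.sup fun j => D j + c j l with hMdef
    have hMs : ∀ i, E i k = Finset.univ.sup fun l => M l + E i l := by
      intro i
      rw [hD i]
      calc Finset.univ.sup (fun j => D j + c j i)
          = Finset.univ.sup fun j => D j + Finset.univ.sup fun l => E i l + c j l :=
            Finset.sup_congr rfl fun j _ => by rw [hfix j i]
      _ = Finset.univ.sup fun j => Finset.univ.sup fun l => D j + (E i l + c j l) :=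
            Finset.sup_congr rfl fun j _ => add_fsup _ _ _
      _ = Finset.univ.sup fun l => Finset.univ.sup fun j => D j + (E i l + c j l) :=
            Finset.sup_comm _ _ _
      _ = Finset.univ.sup fun l => Finset.univ.sup fun j => (D j + c j l) + E i l := by
            refine Finset.sup_congr rfl fun l _ => Finset.sup_congr rfl fun j _ => ?_
            rw [add_comm (E i l) (c j l), ← add_assoc]
      _ = Finset.univ.sup fun l => M l + E i l :=
            Finset.sup_congr rfl fun l _ => (fsup_add _ _ _).symm
    have h0 : (Finset.univ.sup fun l => M l + E k l) = 0 := by rw [← hMs k, hdiag k]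
    obtain ⟨l0, -, hl0⟩ := Finset.exists_mem_eq_sup Finset.univ Finset.univ_nonempty
      (fun l => M l + E k l)
    have hl0' : M l0 + E k l0 = 0 := by rw [← hl0, h0]
    have hl0k : l0 = k := by
      by_contra hne
      have h1 : M l0 ≤ E l0 k := by
        calc M l0 = M l0 + E l0 l0 := by rw [hdiag l0, add_zero]
        _ ≤ Finset.univ.sup fun l => M l + E l0 l :=
            Finset.le_sup (f := fun l => M l + E l0 l) (Finset.mem_univ l0)
        _ = E l0 k := (hMs l0).symm
      have h2 : (0 : Trop) ≤ E l0 k + E k l0 := by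
        calc (0 : Trop) = M l0 + E k l0 := hl0'.symm
        _ ≤ E l0 k + E k l0 := add_le_add h1 le_rfl
      exact absurd (hstrict l0 k hne) (not_lt.2 h2)
    have hMk : M k = 0 := by
      have h3 := hl0'
      rw [hl0k, hdiag k, add_zero] at h3
      exact h3
    obtain ⟨j0, -, hj0⟩ := Finset.exists_mem_eq_sup Finset.univ Finset.univ_nonempty
      (fun j => D j + c j k)
    have hj0' : D j0 + c j0 k = 0 := by rw [← hj0]; exact hMk
    have hD0 : D j0 ≠ ⊥ := by
      intro hb
      rw [hb, WithBot.bot_add] at hj0'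
      exact absurd hj0' (by simp)
    obtain ⟨m, hm⟩ := WithBot.ne_bot_iff_exists.mp hD0
    refine ⟨j0, m, fun i => ?_⟩
    apply le_antisymm
    · have h1 : E i k + c j0 k ≤ c j0 i := by
        rw [← hfix j0 i]
        exact Finset.le_sup (f := fun l => E i l + c j0 l) (Finset.mem_univ k)
      calc E i k = (0 : Trop) + E i k := (zero_add _).symm
      _ = (D j0 + c j0 k) + E i k := by rw [hj0']
      _ = (m : Trop) + (E i k + c j0 k) := by
          rw [← hm, add_assoc, add_comm (c j0 k) (E i k)]
      _ ≤ (m : Trop) + c j0 i := add_le_add le_rfl h1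
    · calc (m : Trop) + c j0 i = D j0 + c j0 i := by rw [hm]
      _ ≤ Finset.univ.sup fun j => D j + c j i :=
          Finset.le_sup (f := fun j => D j + c j i) (Finset.mem_univ j0)
      _ = E i k := (hD i).symm
  choose g μ hkey using key
  have hck : ∀ k, c (g k) k = ((-(μ k) : ℝ) : Trop) := by
    intro k
    have h1 := hkey k k
    rw [hdiag k] at h1
    have h2 := coe_add_eq_zero h1.symm
    rw [h2]
  have ginj : Function.Injective g := by
    intro k k' hgk
    by_contra hne
    have h1 : E k' k = ((μ k - μ k' : ℝ) : Trop) := by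
      rw [hkey k k', hgk, hck k', ← WithBot.coe_add, ← sub_eq_add_neg]
    have h2 : E k k' = ((μ k' - μ k : ℝ) : Trop) := by
      rw [hkey k' k, ← hgk, hck k, ← WithBot.coe_add, ← sub_eq_add_neg]
    have h3 := hstrict k k' hne
    rw [h1, h2, ← WithBot.coe_add] at h3
    have h4 : (μ k' - μ k) + (μ k - μ k') = 0 := by ring
    rw [h4, WithBot.coe_zero] at h3
    exact lt_irrefl _ h3
  have gbij := (Finite.injective_iff_bijective).mp ginj
  set gE : Equiv.Perm (Fin n) := Equiv.ofBijective g gbij with hgEdef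
  have hz : ∀ k, E (σ k) (g k) = ((-(μ k + a k) : ℝ) : Trop) := by
    intro k
    have h2 : ((a k : ℝ) : Trop) + E (σ k) (g k) = ((-(μ k) : ℝ) : Trop) := hck k
    have h3 := coe_add_eq_coe h2
    rw [h3]; congr 1; ring
  have hx : ∀ k, E (σ.symm (g k)) k = ((μ k + a (σ.symm (g k)) : ℝ) : Trop) := by
    intro k
    have h1 := hkey k (σ.symm (g k))
    rw [h1]
    show ((μ k : ℝ) : Trop) + (((a (σ.symm (g k)) : ℝ) : Trop) + E (σ (σ.symm (g k))) (g k)) = _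
    rw [Equiv.apply_symm_apply, hdiag (g k), add_zero, ← WithBot.coe_add]
  set ρ : Equiv.Perm (Fin n) := gE.trans σ.symm with hρdef
  by_cases hρ1 : ρ = 1
  · have hgσ : ∀ k, g k = σ k := by
      intro k
      have h1 := congrArg (fun e : Equiv.Perm (Fin n) => e k) hρ1
      simp only [Equiv.Perm.one_apply] at h1
      have h2 : σ.symm (g k) = k := h1
      have h3 := congrArg σ h2
      rwa [Equiv.apply_symm_apply] at h3
    have hμa : ∀ k, μ k = -(a k) := by
      intro k
      have h1 := hz k
      rw [hgσ k, hdiag (σ k)] at h1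
      have h2 : ((0 : ℝ) : Trop) = ((-(μ k + a k) : ℝ) : Trop) := by
        rw [WithBot.coe_zero]; exact h1
      have h3 : (0 : ℝ) = -(μ k + a k) := by exact_mod_cast h2
      linarith
    funext i j
    rw [hPE i j, hEP i j]
    have h1 := hkey (σ.symm j) i
    rw [h1, hgσ (σ.symm j), Equiv.apply_symm_apply, hμa (σ.symm j)]
    show ((a i : ℝ) : Trop) + E (σ i) j =
      (((-(a (σ.symm j)) : ℝ) : Trop) + (((a i : ℝ) : Trop) + E (σ i) j)) +
        ((a (σ.symm j) : ℝ) : Trop)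
    rw [neg_add_sandwich]
  · exfalso
    have hρapp : ∀ k, ρ k = σ.symm (g k) := fun _ => rfl
    have hsum1 : (∑ k, E (ρ k) k) = (((∑ k, μ k) + (∑ k, a k) : ℝ) : Trop) := by
      calc (∑ k, E (ρ k) k)
          = ∑ k, ((μ k + a (σ.symm (g k)) : ℝ) : Trop) :=
            Finset.sum_congr rfl fun k _ => by rw [hρapp k, hx k]
      _ = (((∑ k, (μ k + a (σ.symm (g k)))) : ℝ) : Trop) := (coe_fsum _ _).symm
      _ = (((∑ k, μ k) + (∑ k, a k) : ℝ) : Trop) := by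
          congr 1
          rw [Finset.sum_add_distrib]
          congr 1
          calc (∑ k, a (σ.symm (g k))) = ∑ k, a (ρ k) :=
                Finset.sum_congr rfl fun k _ => by rw [hρapp k]
          _ = ∑ k, a k := Equiv.sum_comp ρ a
    have hlt := perm_sum_neg hdiag htri hstrict ρ hρ1
    rw [hsum1] at hlt
    have hslt : (∑ k, μ k) + (∑ k, a k) < 0 := by exact_mod_cast hlt
    set τ : Equiv.Perm (Fin n) := gE.symm.trans σ with hτdef
    have hτsum : (∑ m, E (τ m) m) = ((-((∑ k, μ k) + (∑ k, a k)) : ℝ) : Trop) := by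
      rw [← Equiv.sum_comp gE (fun m => E (τ m) m)]
      have h5 : ∀ k, E (τ (gE k)) (gE k) = ((-(μ k + a k) : ℝ) : Trop) := by
        intro k
        have h2 : τ (gE k) = σ k := by
          show σ (gE.symm (gE k)) = σ k
          rw [Equiv.symm_apply_apply]
        rw [h2]
        exact hz k
      rw [Finset.sum_congr rfl fun k _ => h5 k, ← coe_fsum]
      congr 1
      rw [← Finset.sum_add_distrib, Finset.sum_neg_distrib]
    have hle := perm_sum_nonpos hdiag htri hstrict τ
    rw [hτsum] at hle
    have h6 : -((∑ k, μ k) + (∑ k, a k)) ≤ 0 := by exact_mod_cast hle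
    linarith

end S15


/-- For a full rank idempotent `E ∈ M_n(T)`, the monomial matrices `P`
with `C(PE) = C(E)` are exactly the monomial matrices commuting with `E`. -/
theorem stmt_15 {n : ℕ} (E : Fin n → Fin n → Trop)
    (hidem : tmul E E = E) (hr : rowRank E = n) (hc : colRank E = n) :
    {P : Fin n → Fin n → Trop | IsMonomial P ∧ colSpace (tmul P E) = colSpace E} =
    {P : Fin n → Fin n → Trop | IsMonomial P ∧ tmul P E = tmul E P} := by
  ext P
  simp only [Set.mem_setOf_eq]
  constructor
  · rintro ⟨hP, hcol⟩
    refine ⟨hP, ?_⟩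
    rcases lt_or_ge n 2 with hn | hn
    · haveI : Subsingleton (Fin n) := ⟨fun x y => by
        have hx := x.isLt; have hy := y.isLt; exact Fin.ext (by omega)⟩
      funext i j
      have huniv : (Finset.univ : Finset (Fin n)) = {i} :=
        Finset.eq_singleton_iff_unique_mem.mpr
          ⟨Finset.mem_univ i, fun x _ => Subsingleton.elim x i⟩
      have hji : j = i := Subsingleton.elim j i
      rw [hji]
      simp only [tmul, huniv, Finset.sup_singleton]
      exact add_comm _ _
    · exact S15.forward E P hidem hc hn hP hcol
  · rintro ⟨hP, hcomm⟩
    refine ⟨hP, ?_⟩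
    rw [hcomm, S15.colSpace_tmul_monomial E P hP]
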